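/- For every finite X ⊆ 𝒟 that is a proper cover of 𝒯 there exists an integer N ≥ 2 such that the weight N·w(N−1) of any N-rectangle is at most the weight w(X) (the sum of the third coordinates of the members of X). -/

import Mathlib

noncomputable section

/-- 𝒯 = ∏_{n∈ℕ} [2^n]  (the paper's index `n ∈ {1,2,…}` is the Lean index `n+1`). -/
abbrev Tal : Type := (n : ℕ) → Fin (2 ^ (n + 1))

/-- `S_{n,τ} = {f ∈ 𝒯 : f(n) ≠ τ}`. -/
def Sset (n : ℕ) (τ : Fin (2 ^ (n + 1))) : Set Tal := {f | f n ≠ τ}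

/-- The 𝒟-set `⋂_{n ∈ I} S_{n, t n}` with (nonempty, finite) index set `I`;
only the values of `t` on `I` matter. -/
def DSet (I : Finset ℕ) (t : (n : ℕ) → Fin (2 ^ (n + 1))) : Set Tal :=
  {f | ∀ n ∈ I, f n ≠ t n}

/-- `η(k) = 2^{2500 k⁴}`. -/
def ηT (k : ℕ) : ℕ := 2 ^ (2500 * k ^ 4)

/-- `α(k) = (k+5)^{-3}`. -/
def αT (k : ℕ) : ℝ := (((k : ℝ) + 5) ^ 3)⁻¹

/-- `δ(m) = min {n ∈ ℕ : η(n) ≥ m}` (with `ℕ = {1,2,…}`). -/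
def δT (m : ℕ) : ℕ := sInf {n : ℕ | 1 ≤ n ∧ m ≤ ηT n}

/-- `w(n) = 2^{-δ(n)} (η(δ(n))/n)^{α(δ(n))}`. -/
def wT (n : ℕ) : ℝ :=
  (2 : ℝ) ^ (-(δT n : ℤ)) * ((ηT (δT n) : ℝ) / (n : ℝ)) ^ (αT (δT n))

/-- Membership in Talagrand's family 𝒟 for a triple `(X, I, w)`:  for some `k ∈ {1,2,…}`,
`X` is a 𝒟-set with index set `I`, `1 ≤ |I| ≤ η(k)`, and `w = 2^{-k}(η(k)/|I|)^{α(k)}`. -/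
def memD (p : Set Tal × Finset ℕ × ℝ) : Prop :=
  ∃ k : ℕ, 1 ≤ k ∧ (∃ t : (n : ℕ) → Fin (2 ^ (n + 1)), p.1 = DSet p.2.1 t) ∧
    p.2.1.Nonempty ∧ p.2.1.card ≤ ηT k ∧
    p.2.2 = (2 : ℝ) ^ (-(k : ℤ)) * ((ηT k : ℝ) / (p.2.1.card : ℝ)) ^ (αT k)

/-- Talagrand's first pathological submeasure:
`ψ(B) = inf { w(Y) : Y ⊆ 𝒟 finite, B ⊆ ⋃ Y }`. -/
def ψT (B : Set Tal) : ℝ :=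
  sInf {r : ℝ | ∃ Y : Finset (Set Tal × Finset ℕ × ℝ), (∀ p ∈ Y, memD p) ∧
    B ⊆ (⋃ p ∈ Y, p.1) ∧ r = ∑ p ∈ Y, p.2.2}

end

lemma δT_one : δT 1 = 1 := by
  have h1 : (1:ℕ) ∈ {n : ℕ | 1 ≤ n ∧ 1 ≤ ηT n} := ⟨le_refl 1, Nat.one_le_two_pow⟩
  have := Nat.sInf_mem (⟨1, h1⟩ : {n : ℕ | 1 ≤ n ∧ 1 ≤ ηT n}.Nonempty)
  exact le_antisymm (Nat.sInf_le h1) this.1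

lemma sdr {α : Type*} (X : Finset α) (I : α → Finset ℕ)
    (h : ∀ p ∈ X, (X.filter fun q => (I q).card ≤ (I p).card).card ≤ (I p).card) :
    ∃ σ : α → ℕ, Set.InjOn σ X ∧ ∀ p ∈ X, σ p ∈ I p := by
  classical
  induction X using Finset.strongInduction with
  | _ X ih =>
    rcases X.eq_empty_or_nonempty with rfl | hne
    · exact ⟨fun _ => 0, by simp, by simp⟩
    · obtain ⟨p₀, hp₀, hmax⟩ := X.exists_max_image (fun p => (I p).card) hne
      have hXcard : X.card ≤ (I p₀).card := by
        have := h p₀ hp₀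
        rwa [Finset.filter_true_of_mem (fun q hq => hmax q hq)] at this
      set X' := X.erase p₀ with hX'
      have hsub : X' ⊂ X := Finset.erase_ssubset hp₀
      obtain ⟨σ, hinj, hmem⟩ := ih X' hsub (fun p hp => by
        calc (X'.filter fun q => (I q).card ≤ (I p).card).card
            ≤ (X.filter fun q => (I q).card ≤ (I p).card).card :=
              Finset.card_le_card (Finset.filter_subset_filter _ (Finset.erase_subset _ _))
          _ ≤ (I p).card := h p (Finset.mem_of_mem_erase hp))
      have himg : (X'.image σ).card < (I p₀).card := by
        calc (X'.image σ).card ≤ X'.card := Finset.card_image_le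
          _ < X.card := Finset.card_lt_card hsub
          _ ≤ (I p₀).card := hXcard
      obtain ⟨v, hv⟩ : ((I p₀) \ (X'.image σ)).Nonempty := by
        rw [← Finset.card_pos]
        have := Finset.le_card_sdiff (X'.image σ) (I p₀)
        omega
      rw [Finset.mem_sdiff] at hv
      refine ⟨Function.update σ p₀ v, ?_, ?_⟩
      · intro a ha b hb hab
        by_cases hA : a = p₀ <;> by_cases hB : b = p₀
        · rw [hA, hB]
        · exfalso
          rw [hA, Function.update_self, Function.update_of_ne hB] at hab
          exact hv.2 (hab ▸ Finset.mem_image_of_mem σ (Finset.mem_erase.mpr ⟨hB, hb⟩))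
        · exfalso
          rw [hB, Function.update_self, Function.update_of_ne hA] at hab
          exact hv.2 (hab ▸ Finset.mem_image_of_mem σ (Finset.mem_erase.mpr ⟨hA, ha⟩))
        · rw [Function.update_of_ne hA, Function.update_of_ne hB] at hab
          exact hinj (Finset.mem_coe.mpr (Finset.mem_erase.mpr ⟨hA, ha⟩))
            (Finset.mem_coe.mpr (Finset.mem_erase.mpr ⟨hB, hb⟩)) hab
      · intro p hp
        by_cases hP : p = p₀
        · rw [hP, Function.update_self]; exact hv.1
        · rw [Function.update_of_ne hP]
          exact hmem p (Finset.mem_erase.mpr ⟨hP, hp⟩)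

lemma weight_eq (k m : ℕ) (hm : 1 ≤ m) :
    (2 : ℝ) ^ (-(k : ℤ)) * ((ηT k : ℝ) / (m : ℝ)) ^ (αT k)
      = (2:ℝ) ^ ((2500 * (k:ℝ)^4) * αT k - (k:ℝ)) * (m:ℝ) ^ (-(αT k)) := by
  have hm0 : (0:ℝ) < (m:ℝ) := by exact_mod_cast hm
  have hη : (ηT k : ℝ) = (2:ℝ) ^ ((2500 * (k:ℝ)^4)) := by
    rw [ηT]
    push_cast
    rw [← Real.rpow_natCast 2 (2500 * k ^ 4)]
    push_cast
    ring_nf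
  rw [hη, Real.div_rpow (by positivity) (le_of_lt hm0), ← Real.rpow_mul (by norm_num),
    Real.rpow_neg (le_of_lt hm0) (αT k), ← Real.rpow_intCast 2 (-(k:ℤ))]
  push_cast
  rw [div_eq_mul_inv, ← mul_assoc, mul_comm ((2:ℝ) ^ (-(k:ℝ))), ← Real.rpow_add (by norm_num : (0:ℝ) < 2)]
  ring_nf

lemma alpha_le (k : ℕ) (hk : 1 ≤ k) : αT k ≤ αT 1 := by
  have hkr : (1:ℝ) ≤ (k:ℝ) := by exact_mod_cast hk
  rw [αT, αT]
  apply inv_anti₀ (by norm_num)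
  apply pow_le_pow_left₀ (by norm_num) (by push_cast; linarith)

lemma exp_le (k : ℕ) (hk : 1 ≤ k) :
    (2500 * (1:ℝ)^4) * αT 1 - (1:ℝ) ≤ (2500 * (k:ℝ)^4) * αT k - (k:ℝ) := by
  have hkr : (1:ℝ) ≤ (k:ℝ) := by exact_mod_cast hk
  set kr := (k:ℝ)
  have h3 : (0:ℝ) < (kr+5)^3 := by positivity
  have key : (2500*((1+5:ℝ)^3)⁻¹ - 1 + kr) * ((kr+5)^3) ≤ 2500*kr^4 := by
    nlinarith [mul_nonneg (sub_nonneg.2 hkr)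
      (show (0:ℝ) ≤ 539784*kr^3 + 534260*kr^2 + 483800*kr + 285500 by positivity)]
  have h4 : 2500 * ((1+5:ℝ)^3)⁻¹ - 1 + kr ≤ 2500*kr^4 * ((kr+5)^3)⁻¹ := by
    rw [← div_eq_mul_inv]
    exact (le_div_iff₀ h3).mpr key
  rw [αT, αT]
  push_cast
  linarith

lemma key_w (k m : ℕ) (hk : 1 ≤ k) (hm : 1 ≤ m) :
    wT 1 * (m:ℝ) ^ (-(αT 1)) ≤ (2:ℝ) ^ (-(k:ℤ)) * ((ηT k : ℝ) / (m : ℝ)) ^ (αT k) := by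
  have hm1 : (1:ℝ) ≤ (m:ℝ) := by exact_mod_cast hm
  have hw1 : wT 1 = (2:ℝ) ^ ((2500 * (1:ℝ)^4) * αT 1 - (1:ℝ)) := by
    rw [wT, δT_one]
    have := weight_eq 1 1 (le_refl 1)
    push_cast at this ⊢
    rw [this, Real.one_rpow, mul_one]
  rw [hw1, weight_eq k m hm]
  have h1 : (m:ℝ) ^ (-(αT 1)) ≤ (m:ℝ) ^ (-(αT k)) :=
    Real.rpow_le_rpow_of_exponent_le hm1 (neg_le_neg (alpha_le k hk))
  have h2 : (2:ℝ) ^ ((2500 * (1:ℝ)^4) * αT 1 - (1:ℝ))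
      ≤ (2:ℝ) ^ ((2500 * (k:ℝ)^4) * αT k - (k:ℝ)) :=
    Real.rpow_le_rpow_of_exponent_le one_le_two (exp_le k hk)
  exact mul_le_mul h2 h1 (by positivity) (by positivity)

lemma rpow216 (m : ℕ) (hm : 1 ≤ m) : ((m:ℝ) ^ (αT 1)) ^ (216:ℕ) = (m:ℝ) := by
  rw [← Real.rpow_natCast ((m:ℝ) ^ (αT 1)) 216, ← Real.rpow_mul (by positivity)]
  norm_num [αT]

lemma rpow_le_of_le_pow (m : ℕ) (hm : 1 ≤ m) (y : ℝ) (hy1 : 1 ≤ y)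
    (hkey : (m:ℝ) ≤ y ^ (216:ℕ)) : (m:ℝ) ^ (αT 1) ≤ y := by
  by_contra hcon
  push_neg at hcon
  have := pow_lt_pow_left₀ hcon (by positivity : (0:ℝ) ≤ y) (by norm_num : (216:ℕ) ≠ 0)
  rw [rpow216 m hm] at this
  linarith

lemma half_bound (m : ℕ) (hm : 1 ≤ m) : (m:ℝ) ^ (αT 1) ≤ ((m:ℝ) + 1) / 2 := by
  have hm1 : (1:ℝ) ≤ (m:ℝ) := by exact_mod_cast hm
  have hy1 : (1:ℝ) ≤ ((m:ℝ) + 1) / 2 := by linarith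
  refine rpow_le_of_le_pow m hm _ hy1 ?_
  calc (m:ℝ) ≤ (((m:ℝ) + 1) / 2) ^ (2:ℕ) := by nlinarith
    _ ≤ (((m:ℝ) + 1) / 2) ^ (216:ℕ) := pow_le_pow_right₀ hy1 (by norm_num)

/-- For every finite `X ⊆ 𝒟` that properly covers 𝒯 there is an integer
`N ≥ 2` such that the weight `N·w(N−1)` of any `N`-rectangle is at most the weight of `X`. -/
theorem statement9 (X : Finset (Set Tal × Finset ℕ × ℝ))
    (hD : ∀ p ∈ X, memD p)
    (hcover : Set.univ ⊆ ⋃ p ∈ X, p.1)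
    (hproper : ∀ Y ⊆ X, Y ≠ X → ¬ (Set.univ ⊆ ⋃ p ∈ Y, p.1)) :
    ∃ N : ℕ, 2 ≤ N ∧ (N : ℝ) * wT (N - 1) ≤ ∑ p ∈ X, p.2.2 := by
  classical
  refine ⟨2, le_refl 2, ?_⟩
  have hcd : ∀ p ∈ X, 1 ≤ p.2.1.card := by
    intro p hp
    obtain ⟨k, hk, ht, hne, hcard, hw⟩ := hD p hp
    exact Finset.card_pos.mpr hne
  set S := ∑ p ∈ X, ((p.2.1.card : ℝ)) ^ (-(αT 1)) with hSdef
  have hS2 : (2:ℝ) ≤ S := by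
    by_contra hlt
    push_neg at hlt
    have hsel : ∀ p ∈ X,
        (X.filter fun q => q.2.1.card ≤ p.2.1.card).card ≤ p.2.1.card := by
      intro p hp
      set m := p.2.1.card with hmdef
      have hm : 1 ≤ m := hcd p hp
      have hm1 : (1:ℝ) ≤ (m:ℝ) := by exact_mod_cast hm
      set F := X.filter (fun q => q.2.1.card ≤ m) with hF
      have hstep1 : (F.card : ℝ) * (m:ℝ) ^ (-(αT 1)) ≤ S := by
        have h1 : ∀ q ∈ F, (m:ℝ) ^ (-(αT 1)) ≤ ((q.2.1.card:ℝ)) ^ (-(αT 1)) := by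
          intro q hq
          rw [Finset.mem_filter] at hq
          have hq1 : (0:ℝ) < (q.2.1.card : ℝ) := by
            exact_mod_cast hcd q hq.1
          have hq2 : (q.2.1.card : ℝ) ≤ (m:ℝ) := by exact_mod_cast hq.2
          rw [Real.rpow_neg (by positivity), Real.rpow_neg (by positivity)]
          apply inv_anti₀ (by positivity)
          exact Real.rpow_le_rpow (le_of_lt hq1) hq2 (by rw [αT]; positivity)
        calc (F.card : ℝ) * (m:ℝ) ^ (-(αT 1))
            = ∑ _q ∈ F, (m:ℝ) ^ (-(αT 1)) := by
              rw [Finset.sum_const, nsmul_eq_mul]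
          _ ≤ ∑ q ∈ F, ((q.2.1.card:ℝ)) ^ (-(αT 1)) := Finset.sum_le_sum h1
          _ ≤ S := by
              apply Finset.sum_le_sum_of_subset_of_nonneg (Finset.filter_subset _ _)
              intro q hq _
              positivity
      have hmβ : (0:ℝ) < (m:ℝ) ^ (αT 1) := by positivity
      have hinv : (m:ℝ) ^ (-(αT 1)) = ((m:ℝ) ^ (αT 1))⁻¹ :=
        Real.rpow_neg (by positivity) _
      have hstep2 : (F.card : ℝ) < 2 * (m:ℝ) ^ (αT 1) := by
        have h5 : (F.card:ℝ) * (m:ℝ) ^ (-(αT 1)) < 2 := lt_of_le_of_lt hstep1 hlt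
        rw [hinv, ← div_eq_mul_inv, div_lt_iff₀ hmβ] at h5
        exact h5
      have hstep3 : (F.card : ℝ) < (m:ℝ) + 1 := by
        have := half_bound m hm
        nlinarith
      have : F.card < m + 1 := by exact_mod_cast hstep3
      omega
    obtain ⟨σ, hinj, hσ⟩ := sdr X (fun p => p.2.1) hsel
    have hT : ∀ p : Set Tal × Finset ℕ × ℝ,
        ∃ t : (n:ℕ) → Fin (2^(n+1)), p ∈ X → p.1 = DSet p.2.1 t := by
      intro p
      by_cases hp : p ∈ X
      · obtain ⟨k, hk, ⟨t, ht⟩, _⟩ := hD p hp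
        exact ⟨t, fun _ => ht⟩
      · exact ⟨fun n => ⟨0, Nat.pow_pos (by norm_num)⟩, fun h => absurd h hp⟩
    choose T hTs using hT
    set f : Tal := fun n =>
      if h : ∃ p, p ∈ X ∧ σ p = n then T h.choose n
      else ⟨0, Nat.pow_pos (by norm_num)⟩ with hfdef
    have hfv : ∀ p ∈ X, f (σ p) = T p (σ p) := by
      intro p hp
      have hex : ∃ q, q ∈ X ∧ σ q = σ p := ⟨p, hp, rfl⟩
      have h1 : f (σ p) = T hex.choose (σ p) := by
        simp only [hfdef]
        rw [dif_pos hex]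
      rw [h1, hinj hex.choose_spec.1 hp hex.choose_spec.2]
    have hfmem : f ∈ ⋃ p ∈ X, p.1 := hcover (Set.mem_univ f)
    simp only [Set.mem_iUnion] at hfmem
    obtain ⟨p, hp, hfp⟩ := hfmem
    rw [hTs p hp] at hfp
    exact hfp (σ p) (hσ p hp) (hfv p hp)
  have hwpos : (0:ℝ) ≤ wT 1 := by
    rw [wT, δT_one]
    positivity
  have hsum : wT 1 * S ≤ ∑ p ∈ X, p.2.2 := by
    rw [hSdef, Finset.mul_sum]
    apply Finset.sum_le_sum
    intro p hp
    obtain ⟨k, hk, ht, hne, hcard, hw⟩ := hD p hp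
    rw [hw]
    exact key_w k p.2.1.card hk (hcd p hp)
  have : ((2:ℕ):ℝ) * wT (2-1) = wT 1 * 2 := by norm_num [mul_comm]
  rw [this]
  calc wT 1 * 2 ≤ wT 1 * S := mul_le_mul_of_nonneg_left hS2 hwpos
    _ ≤ ∑ p ∈ X, p.2.2 := hsum
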